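/- For every n ≥ 3 there exist a 2-by-n totally positive real matrix A and a real number α > 0 such that the number of pairs (i,j) with 1 ≤ i < j ≤ n and det A[{1,2}|{i,j}] = α is at least 2n − 3. -/

import Mathlib

/-- An m-by-n real matrix is totally positive if every minor of it
(of every size) is strictly positive. -/
def TotallyPositive {m n : ℕ} (A : Matrix (Fin m) (Fin n) ℝ) : Prop :=
  ∀ (k : ℕ) (f : Fin k → Fin m) (g : Fin k → Fin n),
    StrictMono f → StrictMono g → 0 < (A.submatrix f g).det

/-- for every n ≥ 3 there is a 2-by-n totally positive matrix
with at least 2n − 3 of its 2-by-2 minors equal to a common value α > 0. -/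
theorem stmt_16 (n : ℕ) (hn : 3 ≤ n) :
    ∃ (A : Matrix (Fin 2) (Fin n) ℝ) (α : ℝ), TotallyPositive A ∧ 0 < α ∧
      2 * n - 3 ≤ (Finset.univ.filter fun q : Fin n × Fin n =>
        q.1 < q.2 ∧ A 0 q.1 * A 1 q.2 - A 0 q.2 * A 1 q.1 = α).card := by
  have hn0 : 0 < n := by omega
  haveI : NeZero n := ⟨by omega⟩
  set A : Matrix (Fin 2) (Fin n) ℝ := fun i j =>
    if j = 0 then 1 else (n : ℝ) + i.val - j.val with hA
  -- entries positive
  have hpos : ∀ i j, 0 < A i j := by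
    intro i j
    simp only [hA]
    split
    · norm_num
    · have hj : (j : ℕ) ≠ 0 := by
        intro h; exact (by assumption : ¬ j = 0) (Fin.ext h)
      have h1 : (j : ℕ) + 1 ≤ n := j.isLt
      have h2 : ((j : ℕ) : ℝ) + 1 ≤ (n : ℝ) := by exact_mod_cast h1
      have h3 : (0 : ℝ) ≤ (i : ℕ) := by positivity
      linarith
  -- 2x2 minor formula
  have hdet : ∀ u v : Fin n, u < v →
      A 0 u * A 1 v - A 0 v * A 1 u = if u = 0 then 1 else (v.val : ℝ) - u.val := by
    intro u v huv
    have hv : ¬ v = 0 := by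
      intro h; rw [h] at huv; exact absurd huv (by simp [Fin.lt_iff_val_lt_val])
    by_cases hu : u = 0
    · rw [if_pos hu]
      subst hu
      simp only [hA, if_pos rfl, if_neg hv, Fin.val_zero, Fin.val_one]
      push_cast
      ring
    · rw [if_neg hu]
      simp only [hA, if_neg hu, if_neg hv, Fin.val_zero, Fin.val_one]
      push_cast
      ring
  refine ⟨A, 1, ?_, one_pos, ?_⟩
  · -- totally positive
    intro k f g hf hg
    have hk : k ≤ 2 := by
      have := Fintype.card_le_of_injective f hf.injective
      simpa using this
    interval_cases k
    · simp [Matrix.det_fin_zero]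
    · rw [Matrix.det_fin_one]
      exact hpos _ _
    · rw [Matrix.det_fin_two]
      have h01 : (f 0).val < (f 1).val := hf (by decide)
      have h1lt : (f 1).val < 2 := (f 1).isLt
      have hf01 : f 0 = 0 ∧ f 1 = 1 :=
        ⟨Fin.ext (by simp; omega), Fin.ext (by simp; omega)⟩
      have hg01 : g 0 < g 1 := hg (by decide)
      have := hdet (g 0) (g 1) hg01
      simp only [Matrix.submatrix_apply]
      rw [hf01.1, hf01.2]
      have hgoal : 0 < A 0 (g 0) * A 1 (g 1) - A 0 (g 1) * A 1 (g 0) := by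
        rw [this]
        split
        · norm_num
        · have : (g 0).val < (g 1).val := hg01
          have : ((g 0).val : ℝ) < ((g 1).val : ℝ) := by exact_mod_cast this
          linarith
      linarith [hgoal]
  · -- counting
    open Fin.NatCast in
    set S := (Finset.univ.filter fun q : Fin n × Fin n =>
        q.1 < q.2 ∧ A 0 q.1 * A 1 q.2 - A 0 q.2 * A 1 q.1 = 1) with hS
    set F : ℕ → Fin n × Fin n := fun k =>
      if k < n - 1 then ((0 : Fin n), ((k + 1 : ℕ) : Fin n))
      else (((k + 2 - n : ℕ) : Fin n), ((k + 3 - n : ℕ) : Fin n)) with hF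
    have hmaps : ∀ k ∈ Finset.range (2 * n - 3), F k ∈ S := by
      intro k hk
      rw [Finset.mem_range] at hk
      rw [hS, Finset.mem_filter]
      refine ⟨Finset.mem_univ _, ?_⟩
      by_cases hcase : k < n - 1
      · simp only [hF, if_pos hcase]
        have hlt : k + 1 < n := by omega
        have hval : (((k + 1 : ℕ) : Fin n) : ℕ) = k + 1 := Fin.val_cast_of_lt hlt
        have hne : ((k + 1 : ℕ) : Fin n) ≠ 0 := by
          intro h
          have : (((k + 1 : ℕ) : Fin n) : ℕ) = 0 := by rw [h]; simp
          omega
        have horder : (0 : Fin n) < ((k + 1 : ℕ) : Fin n) := by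
          rw [Fin.lt_iff_val_lt_val, hval]; simp
        refine ⟨horder, ?_⟩
        rw [hdet _ _ horder, if_pos rfl]
      · have h1 : 1 ≤ k + 2 - n := by omega
        have h2 : k + 2 - n < n := by omega
        have h3 : k + 3 - n < n := by omega
        have h4 : k + 3 - n = (k + 2 - n) + 1 := by omega
        simp only [hF, if_neg hcase]
        have hv1 : (((k + 2 - n : ℕ) : Fin n) : ℕ) = k + 2 - n := Fin.val_cast_of_lt h2
        have hv2 : (((k + 3 - n : ℕ) : Fin n) : ℕ) = k + 3 - n := Fin.val_cast_of_lt h3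
        have horder : ((k + 2 - n : ℕ) : Fin n) < ((k + 3 - n : ℕ) : Fin n) := by
          rw [Fin.lt_iff_val_lt_val, hv1, hv2]; omega
        refine ⟨horder, ?_⟩
        rw [hdet _ _ horder]
        have hne : ((k + 2 - n : ℕ) : Fin n) ≠ 0 := by
          intro h
          have : (((k + 2 - n : ℕ) : Fin n) : ℕ) = 0 := by rw [h]; simp
          omega
        rw [if_neg hne, hv1, hv2]
        have : ((k + 3 - n : ℕ) : ℝ) = ((k + 2 - n : ℕ) : ℝ) + 1 := by
          rw [h4]; push_cast; ring
        rw [this]; ring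
    have hinj : Set.InjOn F (Finset.range (2 * n - 3)) := by
      intro a ha b hb hab
      rw [Finset.coe_range, Set.mem_Iio] at ha hb
      by_cases hca : a < n - 1 <;> by_cases hcb : b < n - 1
      · simp only [hF, if_pos hca, if_pos hcb, Prod.mk.injEq] at hab
        have := congrArg Fin.val hab.2
        rw [Fin.val_cast_of_lt (by omega), Fin.val_cast_of_lt (by omega)] at this
        omega
      · simp only [hF, if_pos hca, if_neg hcb, Prod.mk.injEq] at hab
        have := congrArg Fin.val hab.1
        rw [Fin.val_cast_of_lt (by omega : b + 2 - n < n)] at this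
        simp at this
        omega
      · simp only [hF, if_neg hca, if_pos hcb, Prod.mk.injEq] at hab
        have := congrArg Fin.val hab.1
        rw [Fin.val_cast_of_lt (by omega : a + 2 - n < n)] at this
        simp at this
        omega
      · simp only [hF, if_neg hca, if_neg hcb, Prod.mk.injEq] at hab
        have := congrArg Fin.val hab.1
        rw [Fin.val_cast_of_lt (by omega : a + 2 - n < n),
            Fin.val_cast_of_lt (by omega : b + 2 - n < n)] at this
        omega
    have := Finset.card_le_card_of_injOn F hmaps hinj
    simpa using this
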